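/- Let Q ⊆ R^{d+m} be a full-dimensional polytope with f(Q) facets whose orthogonal projection to R^d is a d-dimensional polytope P with f(P) facets. Then f(P) ≤ (f(Q)+1)^{m+1}. -/

import Mathlib

open Set Pointwise

noncomputable section

/-- Dot product of two vectors in `Fin n → ℝ`. -/
def dotp {n : ℕ} (c x : Fin n → ℝ) : ℝ := ∑ i, c i * x i

/-- Dimension of a subset of `Fin n → ℝ` (dimension of its affine hull). -/
def sdim {n : ℕ} (S : Set (Fin n → ℝ)) : ℕ := Module.finrank ℝ (vectorSpan ℝ S)

/-- A polytope is the convex hull of a finite set. -/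
def IsPolytope {n : ℕ} (P : Set (Fin n → ℝ)) : Prop :=
  ∃ S : Finset (Fin n → ℝ), P = convexHull ℝ (S : Set (Fin n → ℝ))

/-- The set of maximizers of the linear functional `dotp c` over `P`. -/
def maxFace {n : ℕ} (P : Set (Fin n → ℝ)) (c : Fin n → ℝ) : Set (Fin n → ℝ) :=
  {x ∈ P | ∀ y ∈ P, dotp c y ≤ dotp c x}

/-- `F` is a (nonempty, possibly improper) face of the polytope `P`: the set of
maximizers of some linear functional over `P`. -/
def IsFaceOf {n : ℕ} (P F : Set (Fin n → ℝ)) : Prop := ∃ c, F = maxFace P c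

/-- The optimality cone of a face `F` of `P`: the set of `c` whose set of maximizers
over `P` is exactly `F`. -/
def optCone {n : ℕ} (P F : Set (Fin n → ℝ)) : Set (Fin n → ℝ) := {c | maxFace P c = F}

/-- A facet: a nonempty face of codimension 1. -/
def IsFacetOf {n : ℕ} (P F : Set (Fin n → ℝ)) : Prop :=
  IsFaceOf P F ∧ F.Nonempty ∧ sdim F + 1 = sdim P

/-- Embedding of a subset of `Fin d → ℝ` at height `α` in `Fin (d+1) → ℝ`. -/
def cay {d : ℕ} (α : ℝ) (S : Set (Fin d → ℝ)) : Set (Fin (d + 1) → ℝ) :=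
  (fun x => Fin.snoc x α) '' S

/-- Orthogonal projection onto the first `d` coordinates. -/
def projd {d m : ℕ} (x : Fin (d + m) → ℝ) : Fin d → ℝ := fun i => x (Fin.castAdd m i)

/-- Width of a set in direction `c`. -/
def width {n : ℕ} (S : Set (Fin n → ℝ)) (c : Fin n → ℝ) : ℝ :=
  sSup (dotp c '' S) - sInf (dotp c '' S)

/-- `P'` is an `ε`-approximation of `P`. -/
def EpsApprox {n : ℕ} (ε : ℝ) (P P' : Set (Fin n → ℝ)) : Prop :=
  P ⊆ P' ∧ ∀ c, width P' c ≤ (1 + ε) * width P c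

/-- Binary entropy function (with the convention `0 · log₂ 0 = 0`, which holds for
`Real.logb` since `Real.logb 2 0 = 0`). -/
def binEnt (p : ℝ) : ℝ := -(p * Real.logb 2 p) - (1 - p) * Real.logb 2 (1 - p)

attribute [local instance] Classical.propDecidable

namespace Proj

variable {N : ℕ}

abbrev V (N : ℕ) := Fin N → ℝ

/-- basic linearity of dotp -/
lemma dotp_add_right (c x y : V N) : dotp c (x + y) = dotp c x + dotp c y := by
  simp [dotp, mul_add, Finset.sum_add_distrib]

lemma dotp_smul_right (c : V N) (a : ℝ) (x : V N) : dotp c (a • x) = a * dotp c x := by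
  simp only [dotp, Pi.smul_apply, smul_eq_mul, Finset.mul_sum]
  exact Finset.sum_congr rfl fun i _ => by ring

lemma dotp_sub_right (c x y : V N) : dotp c (x - y) = dotp c x - dotp c y := by
  simp [dotp, mul_sub, Finset.sum_sub_distrib]

lemma dotp_comm (c x : V N) : dotp c x = dotp x c := by
  simp [dotp, mul_comm]

lemma dotp_add_left (c c' x : V N) : dotp (c + c') x = dotp c x + dotp c' x := by
  rw [dotp_comm, dotp_add_right, dotp_comm x c, dotp_comm x c']

lemma dotp_smul_left (c : V N) (a : ℝ) (x : V N) : dotp (a • c) x = a * dotp c x := by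
  rw [dotp_comm, dotp_smul_right, dotp_comm]

lemma dotp_sub_left (c c' x : V N) : dotp (c - c') x = dotp c x - dotp c' x := by
  rw [dotp_comm, dotp_sub_right, dotp_comm x c, dotp_comm x c']

lemma dotp_self_eq_zero {c : V N} (h : dotp c c = 0) : c = 0 := by
  have := (Finset.sum_eq_zero_iff_of_nonneg (fun i _ => mul_self_nonneg (c i))).1 h
  funext i
  exact mul_self_eq_zero.1 (this i (Finset.mem_univ i))

def dotLM (c : V N) : V N →ₗ[ℝ] ℝ where
  toFun := dotp c
  map_add' := dotp_add_right c
  map_smul' := fun a x => dotp_smul_right c a x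

lemma isLinearMap_dotp (c : V N) : IsLinearMap ℝ (dotp c) :=
  ⟨dotp_add_right c, fun a x => dotp_smul_right c a x⟩

lemma dotp_finset_sum {ι : Type*} (t : Finset ι) (f : ι → V N) (x : V N) :
    dotp (∑ i ∈ t, f i) x = ∑ i ∈ t, dotp (f i) x := by
  rw [dotp_comm]
  have : dotp x (∑ i ∈ t, f i) = dotLM x (∑ i ∈ t, f i) := rfl
  rw [this, map_sum (dotLM x) f t]
  exact Finset.sum_congr rfl fun i _ => dotp_comm x (f i)

/-- argmax set over a finite set -/
def amax (S : Finset (V N)) (c : V N) : Finset (V N) :=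
  S.filter (fun s => ∀ t ∈ S, dotp c t ≤ dotp c s)

lemma amax_nonempty {S : Finset (V N)} (hS : S.Nonempty) (c : V N) : (amax S c).Nonempty := by
  obtain ⟨b, hb, hmax⟩ := S.exists_max_image (dotp c) hS
  exact ⟨b, Finset.mem_filter.2 ⟨hb, hmax⟩⟩

lemma amax_subset {S : Finset (V N)} {c : V N} : amax S c ⊆ S := Finset.filter_subset _ _

lemma le_of_mem_hull {S : Finset (V N)} {c : V N} {x : V N}
    (hx : x ∈ convexHull ℝ (S : Set (V N))) {s₀ : V N} (hs₀ : s₀ ∈ amax S c) :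
    dotp c x ≤ dotp c s₀ := by
  have hconv : Convex ℝ {y : V N | dotp c y ≤ dotp c s₀} :=
    convex_halfSpace_le (isLinearMap_dotp c) _
  have hsub : (S : Set (V N)) ⊆ {y : V N | dotp c y ≤ dotp c s₀} := by
    intro t ht
    exact (Finset.mem_filter.1 hs₀).2 t ht
  exact convexHull_min hsub hconv hx

lemma mem_amax_iff {S : Finset (V N)} {c : V N} {s : V N} :
    s ∈ amax S c ↔ s ∈ S ∧ s ∈ maxFace (convexHull ℝ (S : Set (V N))) c := by
  constructor
  · intro hs
    refine ⟨amax_subset hs, subset_convexHull ℝ _ (amax_subset hs), ?_⟩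
    intro y hy
    exact le_of_mem_hull hy hs
  · rintro ⟨hsS, -, hmax⟩
    exact Finset.mem_filter.2 ⟨hsS, fun t ht => hmax t (subset_convexHull ℝ _ ht)⟩

/-- The key structure lemma : the max face of a polytope is the hull of the argmax set. -/
lemma maxFace_hull_eq {S : Finset (V N)} (hS : S.Nonempty) (c : V N) :
    maxFace (convexHull ℝ (S : Set (V N))) c = convexHull ℝ ((amax S c : Finset (V N)) : Set (V N)) := by
  obtain ⟨a₀, ha₀⟩ := amax_nonempty hS c
  apply Set.Subset.antisymm
  · -- maxFace ⊆ hull amax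
    rintro x ⟨hxQ, hxmax⟩
    have hxval : dotp c x = dotp c a₀ := by
      have h1 : dotp c x ≤ dotp c a₀ := le_of_mem_hull hxQ ha₀
      have h2 : dotp c a₀ ≤ dotp c x := hxmax a₀ (subset_convexHull ℝ _ (amax_subset ha₀))
      linarith
    by_cases hall : S ⊆ amax S c
    · have : (S : Set (V N)) ⊆ ((amax S c : Finset (V N)) : Set (V N)) := by
        exact_mod_cast hall
      exact convexHull_mono this hxQ
    · -- split S into amax and the rest
      have hBne : (S \ amax S c).Nonempty := by
        rw [Finset.sdiff_nonempty]; exact hall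
      have hAne : ((amax S c : Finset (V N)) : Set (V N)).Nonempty := ⟨a₀, by exact_mod_cast ha₀⟩
      have hBne' : ((S \ amax S c : Finset (V N)) : Set (V N)).Nonempty := by
        obtain ⟨b, hb⟩ := hBne; exact ⟨b, by exact_mod_cast hb⟩
      have hcover : (S : Set (V N)) = ((amax S c : Finset (V N)) : Set (V N)) ∪ ((S \ amax S c : Finset (V N)) : Set (V N)) := by
        rw [← Finset.coe_union, Finset.union_sdiff_of_subset amax_subset]
      rw [hcover, convexHull_union hAne hBne', mem_convexJoin] at hxQ
      obtain ⟨a, haA, b, hbB, hxseg⟩ := hxQ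
      -- dotp c b < dotp c a₀
      have hblt : dotp c b < dotp c a₀ := by
        -- b in hull of S \ amax ; each element there has dotp < dotp c a₀
        obtain ⟨b', hb', hble⟩ : ∃ b' ∈ (S \ amax S c), dotp c b ≤ dotp c b' := by
          obtain ⟨b'', hb'', hmax⟩ := (S \ amax S c).exists_max_image (dotp c) hBne
          refine ⟨b'', hb'', ?_⟩
          have hconv : Convex ℝ {y : V N | dotp c y ≤ dotp c b''} :=
            convex_halfSpace_le (isLinearMap_dotp c) _
          have : ((S \ amax S c : Finset (V N)) : Set (V N)) ⊆ {y : V N | dotp c y ≤ dotp c b''} := by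
            intro t ht; exact hmax t (by exact_mod_cast ht)
          exact convexHull_min this hconv hbB
        have hb'S : b' ∈ S := (Finset.mem_sdiff.1 hb').1
        have hb'notA : b' ∉ amax S c := (Finset.mem_sdiff.1 hb').2
        have : ∃ t ∈ S, dotp c b' < dotp c t := by
          by_contra hcon
          push_neg at hcon
          exact hb'notA (Finset.mem_filter.2 ⟨hb'S, hcon⟩)
        obtain ⟨t, htS, htlt⟩ := this
        have : dotp c t ≤ dotp c a₀ := (Finset.mem_filter.1 ha₀).2 t htS
        linarith
      have haval : dotp c a ≤ dotp c a₀ := by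
        have : ((amax S c : Finset (V N)) : Set (V N)) ⊆ (S : Set (V N)) := by exact_mod_cast amax_subset
        exact le_of_mem_hull (convexHull_mono this haA) ha₀
      rw [segment_eq_image] at hxseg
      obtain ⟨θ, hθ, hxθ⟩ := hxseg
      -- x = a + θ (b - a) ; dotp c x = (1-θ) dotp a + θ dotp b
      have hdx : dotp c x = (1 - θ) * dotp c a + θ * dotp c b := by
        rw [← hxθ]
        show dotp c ((1 - θ) • a + θ • b) = _
        rw [show (1 - θ) • a + θ • b = a + θ • (b - a) by module]
        rw [dotp_add_right, dotp_smul_right, dotp_sub_right]; ring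
      have hθ0 : θ = 0 := by
        rcases hθ with ⟨h0, h1⟩
        by_contra hne
        have hθpos : 0 < θ := lt_of_le_of_ne h0 (Ne.symm hne)
        have : dotp c x < dotp c a₀ := by
          calc dotp c x = (1 - θ) * dotp c a + θ * dotp c b := hdx
            _ ≤ (1 - θ) * dotp c a₀ + θ * dotp c b := by nlinarith
            _ < (1 - θ) * dotp c a₀ + θ * dotp c a₀ := by nlinarith
            _ = dotp c a₀ := by ring
        linarith [hxval]
      rw [← hxθ]
      rw [hθ0]
      show (1 - (0:ℝ)) • a + (0:ℝ) • b ∈ _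
      simpa using haA
  · -- hull amax ⊆ maxFace
    intro x hx
    have hxQ : x ∈ convexHull ℝ (S : Set (V N)) := by
      refine convexHull_mono ?_ hx
      exact_mod_cast amax_subset
    have hxge : dotp c a₀ ≤ dotp c x := by
      have hconv : Convex ℝ {y : V N | dotp c a₀ ≤ dotp c y} :=
        convex_halfSpace_ge (isLinearMap_dotp c) _
      have hsub : ((amax S c : Finset (V N)) : Set (V N)) ⊆ {y : V N | dotp c a₀ ≤ dotp c y} := by
        intro t ht
        have ht' : t ∈ amax S c := by exact_mod_cast ht
        exact (Finset.mem_filter.1 ht').2 a₀ (amax_subset ha₀)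
      exact convexHull_min hsub hconv hx
    exact ⟨hxQ, fun y hy => le_trans (le_of_mem_hull hy ha₀) hxge⟩


lemma maxFace_subset (Q : Set (V N)) (c : V N) : maxFace Q c ⊆ Q := fun _ h => h.1

lemma maxFace_zero (Q : Set (V N)) : maxFace Q (0 : V N) = Q := by
  ext x
  simp [maxFace, dotp]

/-- every (argmax) face is the hull of the vertices it contains, and face sets are finite -/
lemma faces_finite (S : Finset (V N)) : {F : Set (V N) | IsFaceOf (convexHull ℝ (S : Set (V N))) F}.Finite := by
  rcases S.eq_empty_or_nonempty with rfl | hS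
  · have : {F : Set (V N) | IsFaceOf (convexHull ℝ ((∅ : Finset (V N)) : Set (V N))) F} ⊆ {∅} := by
      rintro F ⟨c, rfl⟩
      simp [maxFace]
    exact (Set.finite_singleton _).subset this
  · have hsub : {F : Set (V N) | IsFaceOf (convexHull ℝ (S : Set (V N))) F} ⊆
        (fun T : Finset (V N) => convexHull ℝ (T : Set (V N))) '' (S.powerset : Set (Finset (V N))) := by
      rintro F ⟨c, rfl⟩
      exact ⟨amax S c, by simpa [Finset.mem_powerset] using (amax_subset (c := c)),
        (maxFace_hull_eq hS c).symm⟩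
    exact ((S.powerset.finite_toSet).image _).subset hsub

lemma facets_finite (S : Finset (V N)) : {F : Set (V N) | IsFacetOf (convexHull ℝ (S : Set (V N))) F}.Finite :=
  (faces_finite S).subset (fun _ h => h.1)

/-- positive combinations of functionals with a common maximizer cut out the intersection face -/
lemma maxFace_sum {Q : Set (V N)} {ι : Type*} (t : Finset ι) (v : ι → V N) (lam : ι → ℝ)
    (hpos : ∀ i ∈ t, 0 < lam i) {x₀ : V N} (hx₀Q : x₀ ∈ Q)
    (hx₀ : ∀ i ∈ t, x₀ ∈ maxFace Q (v i)) :
    maxFace Q (∑ i ∈ t, lam i • v i) = Q ∩ ⋂ i ∈ t, maxFace Q (v i) := by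
  ext x
  constructor
  · rintro ⟨hxQ, hxmax⟩
    refine ⟨hxQ, ?_⟩
    rw [Set.mem_iInter₂]
    intro i hi
    -- each term must be maximized at x
    have hsum0 : ∑ j ∈ t, lam j * (dotp (v j) x₀ - dotp (v j) x) ≤ 0 := by
      have := hxmax x₀ hx₀Q
      rw [dotp_finset_sum, dotp_finset_sum] at this
      have h1 : ∀ y : V N, ∑ j ∈ t, dotp (lam j • v j) y = ∑ j ∈ t, lam j * dotp (v j) y :=
        fun y => Finset.sum_congr rfl fun j _ => dotp_smul_left _ _ _
      rw [h1, h1] at this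
      have : ∑ j ∈ t, lam j * (dotp (v j) x₀ - dotp (v j) x)
          = ∑ j ∈ t, lam j * dotp (v j) x₀ - ∑ j ∈ t, lam j * dotp (v j) x := by
        rw [← Finset.sum_sub_distrib]
        exact Finset.sum_congr rfl fun j _ => by ring
      linarith [this]
    have hterm : ∀ j ∈ t, 0 ≤ lam j * (dotp (v j) x₀ - dotp (v j) x) := by
      intro j hj
      have := (hx₀ j hj).2 x hxQ
      have := hpos j hj
      nlinarith
    have heach : ∀ j ∈ t, lam j * (dotp (v j) x₀ - dotp (v j) x) = 0 := by
      have hz : ∑ j ∈ t, lam j * (dotp (v j) x₀ - dotp (v j) x) = 0 :=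
        le_antisymm hsum0 (Finset.sum_nonneg hterm)
      exact (Finset.sum_eq_zero_iff_of_nonneg hterm).1 hz
    have hi' := heach i hi
    have hlam := hpos i hi
    have hval : dotp (v i) x = dotp (v i) x₀ := by
      have := mul_eq_zero.1 hi'
      rcases this with h | h
      · exact absurd h (ne_of_gt hlam)
      · linarith [sub_eq_zero.1 h]
    exact ⟨hxQ, fun y hy => by rw [hval]; exact (hx₀ i hi).2 y hy⟩
  · rintro ⟨hxQ, hxin⟩
    rw [Set.mem_iInter₂] at hxin
    refine ⟨hxQ, fun y hy => ?_⟩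
    rw [dotp_finset_sum, dotp_finset_sum]
    apply Finset.sum_le_sum
    intro i hi
    rw [dotp_smul_left, dotp_smul_left]
    have := (hxin i hi).2 y hy
    have := hpos i hi
    nlinarith

/-- differences of maximizers are annihilated -/
lemma dotp_vectorSpan_maxFace {Q : Set (V N)} (u : V N) :
    ∀ w ∈ vectorSpan ℝ (maxFace Q u), dotp u w = 0 := by
  intro w hw
  have hle : vectorSpan ℝ (maxFace Q u) ≤ LinearMap.ker (dotLM u) := by
    rw [vectorSpan_def, Submodule.span_le]
    rintro z hz
    rw [Set.mem_vsub] at hz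
    obtain ⟨p, hp, q, hq, rfl⟩ := hz
    have h1 : dotp u p = dotp u q := le_antisymm (hq.2 p hp.1) (hp.2 q hq.1)
    have : dotLM u (p -ᵥ q) = dotp u p - dotp u q := dotp_sub_right u p q
    exact LinearMap.mem_ker.2 (by rw [this, h1]; ring)
  simpa [LinearMap.mem_ker, dotLM] using hle hw

/-- a proper inclusion of faces forces a strict dimension increase -/
lemma sdim_lt_of_face_ssubset {Q F₁ F₂ : Set (V N)} (c₁ : V N) (hF₁ : F₁ = maxFace Q c₁)
    (hne : F₁.Nonempty) (h12 : F₁ ⊆ F₂) (hF₂Q : F₂ ⊆ Q) {x : V N} (hx : x ∈ F₂) (hxn : x ∉ F₁) :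
    sdim F₁ < sdim F₂ := by
  obtain ⟨g, hg⟩ := hne
  set K := LinearMap.ker (dotLM c₁) ⊓ vectorSpan ℝ F₂ with hK
  have h₁K : vectorSpan ℝ F₁ ≤ K := by
    apply le_inf
    · rw [vectorSpan_def, Submodule.span_le]
      rintro z hz
      rw [Set.mem_vsub] at hz
      obtain ⟨p, hp, q, hq, rfl⟩ := hz
      rw [hF₁] at hp hq
      have h1 : dotp c₁ p = dotp c₁ q := le_antisymm (hq.2 p hp.1) (hp.2 q hq.1)
      have : dotLM c₁ (p -ᵥ q) = dotp c₁ p - dotp c₁ q := dotp_sub_right c₁ p q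
      exact LinearMap.mem_ker.2 (by rw [this, h1]; ring)
    · exact vectorSpan_mono ℝ h12
  have hKlt : K < vectorSpan ℝ F₂ := by
    refine lt_of_le_of_ne inf_le_right ?_
    intro heq
    have hv : x -ᵥ g ∈ vectorSpan ℝ F₂ := vsub_mem_vectorSpan ℝ hx (h12 hg)
    rw [← heq] at hv
    have hker : dotLM c₁ (x -ᵥ g) = 0 := (Submodule.mem_inf.1 hv).1
    have hsub : dotp c₁ x - dotp c₁ g = 0 := by
      rw [← dotp_sub_right]
      exact hker
    -- but dotp c₁ x < dotp c₁ g since x ∈ Q is not a maximizer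
    have hxQ : x ∈ Q := hF₂Q hx
    have : ∃ y ∈ Q, dotp c₁ x < dotp c₁ y := by
      by_contra hcon
      push_neg at hcon
      exact hxn (hF₁ ▸ ⟨hxQ, hcon⟩)
    obtain ⟨y, hyQ, hy⟩ := this
    have hgmax : dotp c₁ y ≤ dotp c₁ g := by
      rw [hF₁] at hg; exact hg.2 y hyQ
    linarith
  calc sdim F₁ ≤ Module.finrank ℝ K := Submodule.finrank_mono h₁K
    _ < sdim F₂ := Submodule.finrank_lt_finrank_of_lt hKlt

/-- the "annihilator" of a submodule w.r.t. dotp -/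
def ann (U : Submodule ℝ (V N)) : Submodule ℝ (V N) where
  carrier := {c | ∀ v ∈ U, dotp c v = 0}
  add_mem' := by
    intro a b ha hb v hv
    rw [dotp_add_left]
    rw [ha v hv, hb v hv]; ring
  zero_mem' := by
    intro v hv
    simp [dotp]
  smul_mem' := by
    intro a c hc v hv
    rw [dotp_smul_left, hc v hv]; ring

lemma mem_ann {U : Submodule ℝ (V N)} {c : V N} : c ∈ ann U ↔ ∀ v ∈ U, dotp c v = 0 := Iff.rfl

lemma ann_antitone {U₁ U₂ : Submodule ℝ (V N)} (h : U₁ ≤ U₂) : ann U₂ ≤ ann U₁ :=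
  fun _ hc v hv => hc v (h hv)

lemma finrank_ann_add (U : Submodule ℝ (V N)) :
    Module.finrank ℝ (ann U) + Module.finrank ℝ U = N := by
  classical
  set b := Pi.basisFun ℝ (Fin N)
  set e := b.toDualEquiv
  have he : ∀ c x : V N, e c x = dotp c x := by
    intro c x
    have : e c = dotLM c := by
      apply b.ext
      intro i
      show b.toDual c (b i) = dotLM c (b i)
      rw [Module.Basis.toDual_eq_repr]
      have h1 : b.repr c i = c i := by simp [b, Pi.basisFun_repr]
      have h2 : dotLM c (b i) = c i := by
        show dotp c (b i) = c i
        have : b i = Pi.single i 1 := by simp [b, Pi.basisFun_apply]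
        rw [this, dotp]
        rw [Finset.sum_eq_single i]
        · simp
        · intro j _ hj; simp [Pi.single_apply, hj]
        · intro h; exact absurd (Finset.mem_univ i) h
      rw [h1, h2]
    rw [this]; rfl
  have hanneq : ann U = (Submodule.map (e : V N →ₗ[ℝ] Module.Dual ℝ (V N)) U).dualCoannihilator := by
    ext c
    rw [mem_ann, Submodule.mem_dualCoannihilator]
    constructor
    · rintro h φ ⟨u, hu, rfl⟩
      show (e u) c = 0
      rw [he u c, dotp_comm]
      exact h u hu
    · intro h u hu
      have h2 : (e u) c = 0 := h ((e : V N →ₗ[ℝ] Module.Dual ℝ (V N)) u) ⟨u, hu, rfl⟩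
      rw [he u c, dotp_comm] at h2
      exact h2
  rw [hanneq]
  have := Subspace.finrank_add_finrank_dualCoannihilator_eq
    (Submodule.map (e : V N →ₗ[ℝ] Module.Dual ℝ (V N)) U)
  have hmap : Module.finrank ℝ (Submodule.map (e : V N →ₗ[ℝ] Module.Dual ℝ (V N)) U)
      = Module.finrank ℝ U := LinearEquiv.finrank_map_eq e U
  have hbig : Module.finrank ℝ (Fin N → ℝ) = N := by
    rw [Module.finrank_pi]; simp
  have hdual : Module.finrank ℝ (Module.Dual ℝ (Fin N → ℝ)) = Module.finrank ℝ (Fin N → ℝ) :=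
    Subspace.dual_finrank_eq
  rw [← hmap, Nat.add_comm, this, hbig]


/-- Conic Carathéodory: a positive combination can be rewritten as a positive combination
over a linearly independent subfamily. -/
lemma carath {M : Type*} [AddCommGroup M] [Module ℝ M] {ι : Type*} [DecidableEq ι]
    (t : Finset ι) (v : ι → M) :
    ∀ lam : ι → ℝ, (∀ i ∈ t, 0 < lam i) →
    ∃ t' ⊆ t, (LinearIndependent ℝ (fun i : {x // x ∈ t'} => v i)) ∧
      ∃ lam' : ι → ℝ, (∀ i ∈ t', 0 < lam' i) ∧
        ∑ i ∈ t', lam' i • v i = ∑ i ∈ t, lam i • v i := by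
  induction t using Finset.strongInduction with
  | _ t ih =>
    intro lam hpos
    by_cases hli : LinearIndependent ℝ (fun i : {x // x ∈ t} => v i)
    · exact ⟨t, Finset.Subset.refl t, hli, lam, hpos, rfl⟩
    · obtain ⟨g, hgsum, i₀, hgi₀⟩ := Fintype.not_linearIndependent_iff.1 hli
      set G : ι → ℝ := fun i => if h : i ∈ t then g ⟨i, h⟩ else 0 with hG
      have hGsum : ∑ i ∈ t, G i • v i = 0 := by
        rw [← hgsum, ← Finset.sum_attach t (fun i => G i • v i)]
        apply Finset.sum_congr rfl
        intro i _
        simp [hG, i.2]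
      have main : ∀ g' : ι → ℝ, (∑ i ∈ t, g' i • v i = 0) → (∃ i ∈ t, 0 < g' i) →
          ∃ t' ⊆ t, (LinearIndependent ℝ (fun i : {x // x ∈ t'} => v i)) ∧
          ∃ lam' : ι → ℝ, (∀ i ∈ t', 0 < lam' i) ∧
            ∑ i ∈ t', lam' i • v i = ∑ i ∈ t, lam i • v i := by
        intro g' hg'sum ⟨ip, hipt, hippos⟩
        set Tp := t.filter (fun i => 0 < g' i) with hTp
        have hTpne : Tp.Nonempty := ⟨ip, Finset.mem_filter.2 ⟨hipt, hippos⟩⟩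
        set r := Tp.inf' hTpne (fun i => lam i / g' i) with hr
        obtain ⟨istar, histar, hristar⟩ := Finset.exists_mem_eq_inf' hTpne (fun i => lam i / g' i)
        have histarT : istar ∈ t := (Finset.mem_filter.1 histar).1
        have histarpos : 0 < g' istar := (Finset.mem_filter.1 histar).2
        have hrpos : 0 < r := by
          rw [hr, Finset.lt_inf'_iff]
          intro i hi
          exact div_pos (hpos i (Finset.mem_filter.1 hi).1) (Finset.mem_filter.1 hi).2
        set lam2 : ι → ℝ := fun i => lam i - r * g' i with hlam2
        have hlam2nonneg : ∀ i ∈ t, 0 ≤ lam2 i := by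
          intro i hiT
          by_cases hgi : 0 < g' i
          · have hiTp : i ∈ Tp := Finset.mem_filter.2 ⟨hiT, hgi⟩
            have : r ≤ lam i / g' i := Finset.inf'_le _ hiTp
            have h3 := (le_div_iff₀ hgi).1 this
            show 0 ≤ lam i - r * g' i
            linarith
          · push_neg at hgi
            have h3 : 0 ≤ -(r * g' i) := by nlinarith
            have h4 := hpos i hiT
            show 0 ≤ lam i - r * g' i
            linarith
        have hlam2star : lam2 istar = 0 := by
          show lam istar - r * g' istar = 0
          rw [hr, hristar]
          field_simp
          ring
        have hlam2sum : ∑ i ∈ t, lam2 i • v i = ∑ i ∈ t, lam i • v i := by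
          have : ∑ i ∈ t, lam2 i • v i = ∑ i ∈ t, lam i • v i - r • ∑ i ∈ t, g' i • v i := by
            rw [Finset.smul_sum, ← Finset.sum_sub_distrib]
            apply Finset.sum_congr rfl
            intro i _
            show (lam i - r * g' i) • v i = lam i • v i - r • g' i • v i
            rw [sub_smul, smul_smul]
          rw [this, hg'sum, smul_zero, sub_zero]
        set t2 := t.filter (fun i => 0 < lam2 i) with ht2
        have ht2sub : t2 ⊆ t := Finset.filter_subset _ _
        have ht2sum : ∑ i ∈ t2, lam2 i • v i = ∑ i ∈ t, lam2 i • v i := by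
          apply Finset.sum_subset ht2sub
          intro i hiT hiN
          have h0 : lam2 i = 0 := by
            have := hlam2nonneg i hiT
            by_contra hne
            exact hiN (Finset.mem_filter.2 ⟨hiT, lt_of_le_of_ne this (Ne.symm hne)⟩)
          rw [h0, zero_smul]
        have ht2ssub : t2 ⊂ t := by
          refine Finset.ssubset_iff_of_subset ht2sub |>.2 ⟨istar, histarT, ?_⟩
          intro hmem
          have := (Finset.mem_filter.1 hmem).2
          rw [hlam2star] at this
          exact lt_irrefl 0 this
        obtain ⟨t', ht'sub, ht'li, lam', hlam'pos, hlam'sum⟩ :=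
          ih t2 ht2ssub lam2 (fun i hi => (Finset.mem_filter.1 hi).2)
        exact ⟨t', ht'sub.trans ht2sub, ht'li, lam', hlam'pos, by rw [hlam'sum, ht2sum, hlam2sum]⟩
      by_cases hposg : ∃ i ∈ t, 0 < G i
      · exact main G hGsum hposg
      · apply main (fun i => -G i)
        · rw [← neg_zero, ← hGsum, ← Finset.sum_neg_distrib]
          apply Finset.sum_congr rfl
          intro i _
          rw [neg_smul]
        · push_neg at hposg
          refine ⟨i₀, i₀.2, ?_⟩
          have hGi₀ : G i₀ = g i₀ := by simp [hG, i₀.2]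
          have h1 : G i₀ ≤ 0 := hposg i₀ i₀.2
          have h2 : G i₀ ≠ 0 := by rw [hGi₀]; exact fun h => hgi₀ (by exact_mod_cast h)
          have : G i₀ < 0 := lt_of_le_of_ne h1 h2
          linarith


lemma amax_value_eq {S : Finset (V N)} {u : V N} {s t : V N}
    (hs : s ∈ amax S u) (ht : t ∈ amax S u) : dotp u s = dotp u t :=
  le_antisymm ((Finset.mem_filter.1 ht).2 s (amax_subset hs))
    ((Finset.mem_filter.1 hs).2 t (amax_subset ht))

lemma vectorSpan_hull_eq (S : Finset (V N)) :
    vectorSpan ℝ (convexHull ℝ (S : Set (V N))) = vectorSpan ℝ (S : Set (V N)) := by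
  rw [← direction_affineSpan, ← direction_affineSpan ℝ (S : Set (V N)), affineSpan_convexHull]

lemma finrank_ann_add_sdim (G : Set (V N)) :
    Module.finrank ℝ (ann (vectorSpan ℝ G)) + sdim G = N :=
  finrank_ann_add (vectorSpan ℝ G)

section Decomp

variable {S : Finset (V N)} (hS : S.Nonempty)
  (htop : vectorSpan ℝ (convexHull ℝ (S : Set (V N))) = ⊤)

local notation "Q" => convexHull ℝ (S : Set (V N))

include hS htop in
set_option maxHeartbeats 2000000 in
lemma decomp : ∀ (j : ℕ) (u : V N), N ≤ sdim (maxFace Q u) + j →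
    ∃ (k : ℕ) (v : Fin k → V N) (lam : Fin k → ℝ),
      (∀ i, 0 < lam i) ∧ (∑ i, lam i • v i) = u ∧
      (∀ i, IsFacetOf Q (maxFace Q (v i)) ∧ maxFace Q u ⊆ maxFace Q (v i)) := by
  have hrkN : Module.finrank ℝ (Fin N → ℝ) = N := by rw [Module.finrank_pi]; simp
  have hsQ : sdim Q = N := by
    rw [sdim, htop]
    rw [finrank_top]
    exact hrkN
  intro j
  induction j with
  | zero =>
    intro u hu
    have h1 : Module.finrank ℝ (vectorSpan ℝ (maxFace Q u)) ≤ N := by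
      have := Submodule.finrank_le (vectorSpan ℝ (maxFace Q u))
      omega
    have h2 : Module.finrank ℝ (vectorSpan ℝ (maxFace Q u)) = N := by
      have : sdim (maxFace Q u) = Module.finrank ℝ (vectorSpan ℝ (maxFace Q u)) := rfl
      omega
    have htopF : vectorSpan ℝ (maxFace Q u) = ⊤ := by
      apply Submodule.eq_top_of_finrank_eq
      rw [h2, hrkN]
    have hu0 : u = 0 := by
      apply dotp_self_eq_zero
      exact dotp_vectorSpan_maxFace u u (by rw [htopF]; trivial)
    refine ⟨0, Fin.elim0, Fin.elim0, fun i => i.elim0, ?_, fun i => i.elim0⟩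
    rw [hu0]
    simp
  | succ j ihj =>
    intro u hu
    by_cases hle : N ≤ sdim (maxFace Q u) + j
    · exact ihj u hle
    push_neg at hle
    have hcodim : sdim (maxFace Q u) + (j + 1) = N := by omega
    set G := maxFace Q u with hGdef
    set Z := amax S u with hZdef
    have hGZ : G = convexHull ℝ (Z : Set (V N)) := maxFace_hull_eq hS u
    obtain ⟨s₀, hs₀⟩ := amax_nonempty hS u
    have hs₀S : s₀ ∈ S := amax_subset hs₀
    have hs₀G : s₀ ∈ G := (mem_amax_iff.1 hs₀).2
    have hGne : G.Nonempty := ⟨s₀, hs₀G⟩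
    rcases Nat.eq_zero_or_pos j with hj0 | hjpos
    · -- base case : G is already a facet
      subst hj0
      have hfacet : IsFacetOf Q G := ⟨⟨u, rfl⟩, hGne, by omega⟩
      exact ⟨1, fun _ => u, fun _ => 1, fun _ => one_pos, by simp, fun i => ⟨hfacet, le_refl _⟩⟩
    · -- surgery case : codim ≥ 2
      set W := ann (vectorSpan ℝ G) with hWdef
      have hsdG : sdim G = Module.finrank ℝ (vectorSpan ℝ G) := rfl
      have hWrank : Module.finrank ℝ W = j + 1 := by
        show Module.finrank ℝ (ann (vectorSpan ℝ G)) = j + 1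
        have h1 := finrank_ann_add_sdim G
        omega
      have huW : u ∈ W := fun x hx => dotp_vectorSpan_maxFace u x hx
      have hnotle : ¬ (W ≤ Submodule.span ℝ {u}) := by
        intro hWle
        have h1 : Module.finrank ℝ W ≤ Module.finrank ℝ (Submodule.span ℝ {u}) :=
          Submodule.finrank_mono hWle
        have h2 : Module.finrank ℝ (Submodule.span ℝ {u}) ≤ 1 := by
          rcases eq_or_ne u 0 with h | h
          · rw [h, Submodule.span_zero_singleton]
            simp
          · rw [finrank_span_singleton h]
        omega
      obtain ⟨w₀, hw₀W, hw₀sp⟩ := SetLike.not_le_iff_exists.1 hnotle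
      clear hnotle
      set Sc := S \ Z with hScdef
      have hScne : Sc.Nonempty := by
        rw [Finset.sdiff_nonempty]
        intro hsub
        have hQG : Q ⊆ G := by
          rw [hGZ]
          refine convexHull_mono ?_
          exact_mod_cast hsub
        have hGQ : G = Q := Set.Subset.antisymm (maxFace_subset _ _) hQG
        rw [hGQ] at hcodim
        omega
      have havneg : ∀ s ∈ Sc, dotp u s - dotp u s₀ < 0 := by
        intro s hs
        have hsS : s ∈ S := (Finset.mem_sdiff.1 hs).1
        have hsnZ : s ∉ Z := (Finset.mem_sdiff.1 hs).2
        have : ∃ t ∈ S, dotp u s < dotp u t := by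
          by_contra hcon
          push_neg at hcon
          exact hsnZ (Finset.mem_filter.2 ⟨hsS, hcon⟩)
        obtain ⟨t, htS, hlt⟩ := this
        have := (Finset.mem_filter.1 hs₀).2 t htS
        linarith
      have hZeq : ∀ w ∈ W, ∀ s ∈ Z, dotp w s = dotp w s₀ := by
        intro w hw s hs
        have h1 : s ∈ G := (mem_amax_iff.1 hs).2
        have h3 : s -ᵥ s₀ ∈ vectorSpan ℝ G := vsub_mem_vectorSpan ℝ h1 hs₀G
        have h4 := hw _ h3
        have : dotp w (s - s₀) = dotp w s - dotp w s₀ := dotp_sub_right w s s₀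
        rw [show s -ᵥ s₀ = s - s₀ from rfl, this] at h4
        linarith
      -- values
      set av : V N → ℝ := fun s => dotp u s - dotp u s₀ with havdef
      set bv0 : V N → ℝ := fun s => dotp w₀ s - dotp w₀ s₀ with hbv0def
      set ρ₀ := Sc.inf' hScne (fun s => bv0 s / av s) with hρ₀
      set ρ₁ := Sc.sup' hScne (fun s => bv0 s / av s) with hρ₁
      have hρlt : ρ₀ < ρ₁ := by
        rcases lt_or_ge ρ₀ ρ₁ with h | h
        · exact h
        · exfalso
          have hall : ∀ s ∈ Sc, bv0 s / av s = ρ₀ := by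
            intro s hs
            have h1 : ρ₀ ≤ bv0 s / av s := Finset.inf'_le (fun s => bv0 s / av s) hs
            have h2 : bv0 s / av s ≤ ρ₁ := Finset.le_sup' (fun s => bv0 s / av s) hs
            linarith
          have hw' : ∀ s ∈ S, dotp (w₀ - ρ₀ • u) (s - s₀) = 0 := by
            intro s hsS
            rw [dotp_sub_right, dotp_sub_left, dotp_sub_left, dotp_smul_left, dotp_smul_left]
            by_cases hsZ : s ∈ Z
            · have h1 := hZeq w₀ hw₀W s hsZ
              have h2 : dotp u s = dotp u s₀ := amax_value_eq hsZ hs₀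
              rw [h1, h2]
              ring
            · have hsSc : s ∈ Sc := Finset.mem_sdiff.2 ⟨hsS, hsZ⟩
              have h1 := hall s hsSc
              have h2 := havneg s hsSc
              have h3 : bv0 s = ρ₀ * av s := by
                have hne : av s ≠ 0 := ne_of_lt h2
                rw [← h1]
                field_simp
              have : dotp w₀ s - dotp w₀ s₀ = ρ₀ * (dotp u s - dotp u s₀) := h3
              linarith [this]
          have hw'0 : w₀ - ρ₀ • u = 0 := by
            apply dotp_self_eq_zero
            have hspan : vectorSpan ℝ (S : Set (V N)) = ⊤ := by
              rw [← vectorSpan_hull_eq]; exact htop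
            have hker : (⊤ : Submodule ℝ (V N)) ≤ LinearMap.ker (dotLM (w₀ - ρ₀ • u)) := by
              rw [← hspan, vectorSpan_eq_span_vsub_set_right ℝ (show s₀ ∈ (S : Set (V N)) by exact_mod_cast hs₀S)]
              rw [Submodule.span_le]
              rintro z ⟨s, hsS, rfl⟩
              exact LinearMap.mem_ker.2 (hw' s (by exact_mod_cast hsS))
            exact LinearMap.mem_ker.1 (hker (Submodule.mem_top))
          have : w₀ = ρ₀ • u := by rwa [sub_eq_zero] at hw'0
          exact hw₀sp (this ▸ Submodule.smul_mem _ _ (Submodule.mem_span_singleton_self u))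
      set ρ := (ρ₀ + ρ₁)/2 with hρdef
      set w := w₀ - ρ • u with hwdef
      have hwW : w ∈ W := sub_mem hw₀W (Submodule.smul_mem _ _ huW)
      set bv : V N → ℝ := fun s => dotp w s - dotp w s₀ with hbvdef
      have hbvrel : ∀ s : V N, bv s = bv0 s - ρ * av s := by
        intro s
        show dotp (w₀ - ρ • u) s - dotp (w₀ - ρ • u) s₀ = _
        rw [dotp_sub_left, dotp_sub_left, dotp_smul_left, dotp_smul_left]
        show dotp w₀ s - ρ * dotp u s - (dotp w₀ s₀ - ρ * dotp u s₀) = (dotp w₀ s - dotp w₀ s₀) - ρ * (dotp u s - dotp u s₀)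
        ring
      have hbvZ : ∀ s ∈ Z, bv s = 0 := by
        intro s hs
        have := hZeq w hwW s hs
        show dotp w s - dotp w s₀ = 0
        linarith
      -- elements with positive and negative bv
      obtain ⟨sp0, hsp0, hsp0eq⟩ := Finset.exists_mem_eq_inf' hScne (fun s => bv0 s / av s)
      obtain ⟨sn0, hsn0, hsn0eq⟩ := Finset.exists_mem_eq_sup' hScne (fun s => bv0 s / av s)
      have hbv_of_ratio : ∀ s ∈ Sc, bv s = av s * (bv0 s / av s - ρ) := by
        intro s hs
        have hne : av s ≠ 0 := ne_of_lt (havneg s hs)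
        rw [hbvrel]
        field_simp
      have hsp0pos : 0 < bv sp0 := by
        rw [hbv_of_ratio sp0 hsp0, ← hsp0eq]
        have h1 := havneg sp0 hsp0
        have h2 : ρ₀ - ρ < 0 := by rw [hρdef]; linarith
        exact mul_pos_of_neg_of_neg h1 h2
      have hsn0neg : bv sn0 < 0 := by
        rw [hbv_of_ratio sn0 hsn0, ← hsn0eq]
        have h1 := havneg sn0 hsn0
        have h2 : 0 < ρ₁ - ρ := by rw [hρdef]; linarith
        exact mul_neg_of_neg_of_pos h1 h2
      set Bp := Sc.filter (fun s => 0 < bv s) with hBp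
      set Bm := Sc.filter (fun s => bv s < 0) with hBm
      have hBpne : Bp.Nonempty := ⟨sp0, Finset.mem_filter.2 ⟨hsp0, hsp0pos⟩⟩
      have hBmne : Bm.Nonempty := ⟨sn0, Finset.mem_filter.2 ⟨hsn0, hsn0neg⟩⟩
      set tp := Bp.inf' hBpne (fun s => -av s / bv s) with htpdef
      set tm := Bm.sup' hBmne (fun s => -av s / bv s) with htmdef
      have htppos : 0 < tp := by
        rw [htpdef, Finset.lt_inf'_iff]
        intro s hs
        have h1 := havneg s (Finset.mem_filter.1 hs).1
        have h2 := (Finset.mem_filter.1 hs).2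
        have h3 : av s = dotp u s - dotp u s₀ := rfl
        apply div_pos (by linarith) h2
      have htmneg : tm < 0 := by
        rw [htmdef, Finset.sup'_lt_iff]
        intro s hs
        have h1 := havneg s (Finset.mem_filter.1 hs).1
        have h2 := (Finset.mem_filter.1 hs).2
        have h3 : av s = dotp u s - dotp u s₀ := rfl
        exact div_neg_of_pos_of_neg (by linarith) h2
      -- feasibility of the endpoints
      have hconsm : ∀ s ∈ Sc, av s + tm * bv s ≤ 0 := by
        intro s hs
        have h3 : av s = dotp u s - dotp u s₀ := rfl
        have h4 := havneg s hs
        rcases lt_trichotomy (bv s) 0 with h | h | h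
        · have hsBm : s ∈ Bm := Finset.mem_filter.2 ⟨hs, h⟩
          have h1 : -av s / bv s ≤ tm := Finset.le_sup' (fun s => -av s / bv s) hsBm
          have h2 := (div_le_iff_of_neg h).1 h1
          linarith
        · rw [h]; linarith
        · have h5 : tm * bv s < 0 := mul_neg_of_neg_of_pos htmneg h
          linarith
      have hconsp : ∀ s ∈ Sc, av s + tp * bv s ≤ 0 := by
        intro s hs
        have h3 : av s = dotp u s - dotp u s₀ := rfl
        have h4 := havneg s hs
        rcases lt_trichotomy (bv s) 0 with h | h | h
        · have h5 : tp * bv s < 0 := mul_neg_of_pos_of_neg htppos h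
          linarith
        · rw [h]; linarith
        · have hsBp : s ∈ Bp := Finset.mem_filter.2 ⟨hs, h⟩
          have h1 : tp ≤ -av s / bv s := Finset.inf'_le (fun s => -av s / bv s) hsBp
          have h2 := (le_div_iff₀ h).1 h1
          linarith
      have havpt : ∀ s : V N, av s = dotp u s - dotp u s₀ := fun s => rfl
      have hbvpt : ∀ s : V N, bv s = dotp w s - dotp w s₀ := fun s => rfl
      clear_value av bv0 bv ρ ρ₀ ρ₁ w tp tm
      -- tight elements
      obtain ⟨sm, hsmBm, hsmeq⟩ := Finset.exists_mem_eq_sup' hBmne (fun s => -av s / bv s)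
      obtain ⟨sq, hsqBp, hsqeq⟩ := Finset.exists_mem_eq_inf' hBpne (fun s => -av s / bv s)
      have hsmtight : av sm + tm * bv sm = 0 := by
        have hbne : bv sm ≠ 0 := ne_of_lt (Finset.mem_filter.1 hsmBm).2
        have h7 : tm = -av sm / bv sm := by rw [htmdef, hsmeq]
        rw [h7, div_mul_cancel₀ _ hbne]
        ring
      have hsqtight : av sq + tp * bv sq = 0 := by
        have hbne : bv sq ≠ 0 := ne_of_gt (Finset.mem_filter.1 hsqBp).2
        have h7 : tp = -av sq / bv sq := by rw [htpdef, hsqeq]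
        rw [h7, div_mul_cancel₀ _ hbne]
        ring
      -- master step : a feasible tight point gives a strictly bigger face
      have key : ∀ (t : ℝ), (∀ s ∈ Sc, av s + t * bv s ≤ 0) →
          ∀ s1 ∈ Sc, av s1 + t * bv s1 = 0 →
          G ⊆ maxFace Q (u + t • w) ∧ N ≤ sdim (maxFace Q (u + t • w)) + j := by
        intro t hcons s1 hs1 htight
        have hval : ∀ x ∈ S, dotp (u + t • w) x ≤ dotp (u + t • w) s₀ := by
          intro x hx
          rw [dotp_add_left, dotp_add_left, dotp_smul_left, dotp_smul_left]
          by_cases hxZ : x ∈ Z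
          · have h1 : dotp u x = dotp u s₀ := amax_value_eq hxZ hs₀
            have h2 : bv x = 0 := hbvZ x hxZ
            have h3 : dotp w x = dotp w s₀ := by
              rw [hbvpt x] at h2
              linarith
            rw [h1, h3]
          · have hxSc : x ∈ Sc := Finset.mem_sdiff.2 ⟨hx, hxZ⟩
            have h9 := hcons x hxSc
            rw [havpt x, hbvpt x] at h9
            linarith [h9, mul_sub t (dotp w x) (dotp w s₀)]
        have hZsub : ∀ z ∈ Z, z ∈ amax S (u + t • w) := by
          intro z hz
          refine Finset.mem_filter.2 ⟨amax_subset hz, ?_⟩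
          intro x hx
          have h1 := hval x hx
          have h2 : dotp (u + t • w) z = dotp (u + t • w) s₀ := by
            rw [dotp_add_left, dotp_add_left, dotp_smul_left, dotp_smul_left]
            have h3 : dotp u z = dotp u s₀ := amax_value_eq hz hs₀
            have h4 : bv z = 0 := hbvZ z hz
            have h5 : dotp w z = dotp w s₀ := by
              rw [hbvpt z] at h4
              linarith
            rw [h3, h5]
          linarith
        have hGsub : G ⊆ maxFace Q (u + t • w) := by
          rw [hGZ, maxFace_hull_eq hS]
          apply convexHull_mono
          intro z hz
          exact_mod_cast hZsub z (by exact_mod_cast hz)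
        have hs1S : s1 ∈ S := (Finset.mem_sdiff.1 hs1).1
        have hs1amax : s1 ∈ amax S (u + t • w) := by
          refine Finset.mem_filter.2 ⟨hs1S, ?_⟩
          intro x hx
          have h1 := hval x hx
          have h2 : dotp (u + t • w) s1 = dotp (u + t • w) s₀ := by
            rw [dotp_add_left, dotp_add_left, dotp_smul_left, dotp_smul_left]
            have h9 := htight
            rw [havpt s1, hbvpt s1] at h9
            linarith [h9, mul_sub t (dotp w s1) (dotp w s₀)]
          linarith
        have hs1F : s1 ∈ maxFace Q (u + t • w) := (mem_amax_iff.1 hs1amax).2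
        have hs1nG : s1 ∉ G := by
          intro hcon
          exact (Finset.mem_sdiff.1 hs1).2 (mem_amax_iff.2 ⟨hs1S, hcon⟩)
        have hdim : sdim G < sdim (maxFace Q (u + t • w)) :=
          sdim_lt_of_face_ssubset u rfl hGne hGsub (maxFace_subset _ _) hs1F hs1nG
        exact ⟨hGsub, by omega⟩
      have hsmSc : sm ∈ Sc := (Finset.mem_filter.1 hsmBm).1
      have hsqSc : sq ∈ Sc := (Finset.mem_filter.1 hsqBp).1
      obtain ⟨hGsub1, hdim1⟩ := key tm hconsm sm hsmSc hsmtight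
      obtain ⟨hGsub2, hdim2⟩ := key tp hconsp sq hsqSc hsqtight
      obtain ⟨k1, v1, lam1, hpos1, hsum1, hcond1⟩ := ihj (u + tm • w) hdim1
      obtain ⟨k2, v2, lam2, hpos2, hsum2, hcond2⟩ := ihj (u + tp • w) hdim2
      set denom := tp - tm with hdenom
      have hdenompos : 0 < denom := by rw [hdenom]; linarith
      set α := tp / denom with hα
      set β := -tm / denom with hβ
      have hαpos : 0 < α := div_pos htppos hdenompos
      have hβpos : 0 < β := div_pos (by linarith) hdenompos
      have hab1 : α + β = 1 := by
        rw [hα, hβ, ← add_div, hdenom]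
        rw [show tp + -tm = tp - tm by ring]
        exact div_self (ne_of_gt hdenompos)
      have hab2 : α * tm + β * tp = 0 := by
        rw [hα, hβ]
        field_simp
        ring
      have hcomb : α • (u + tm • w) + β • (u + tp • w) = u := by
        have hexp : α • (u + tm • w) + β • (u + tp • w) = (α + β) • u + (α * tm + β * tp) • w := by
          module
        rw [hexp, hab1, hab2, one_smul, zero_smul, add_zero]
      refine ⟨k1 + k2, Fin.append v1 v2,
        Fin.append (fun i => α * lam1 i) (fun i => β * lam2 i), ?_, ?_, ?_⟩
      · intro i
        refine Fin.addCases (fun i1 => ?_) (fun i2 => ?_) i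
        · rw [Fin.append_left]
          exact mul_pos hαpos (hpos1 i1)
        · rw [Fin.append_right]
          exact mul_pos hβpos (hpos2 i2)
      · rw [Fin.sum_univ_add]
        have h1 : ∀ i1 : Fin k1, (Fin.append (fun i => α * lam1 i) (fun i => β * lam2 i)) (Fin.castAdd k2 i1) • (Fin.append v1 v2) (Fin.castAdd k2 i1) = α • (lam1 i1 • v1 i1) := by
          intro i1
          rw [Fin.append_left, Fin.append_left, mul_smul]
        have h2 : ∀ i2 : Fin k2, (Fin.append (fun i => α * lam1 i) (fun i => β * lam2 i)) (Fin.natAdd k1 i2) • (Fin.append v1 v2) (Fin.natAdd k1 i2) = β • (lam2 i2 • v2 i2) := by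
          intro i2
          rw [Fin.append_right, Fin.append_right, mul_smul]
        rw [Finset.sum_congr rfl (fun i _ => h1 i), Finset.sum_congr rfl (fun i _ => h2 i)]
        rw [← Finset.smul_sum, ← Finset.smul_sum, hsum1, hsum2]
        exact hcomb
      · intro i
        refine Fin.addCases (fun i1 => ?_) (fun i2 => ?_) i
        · rw [Fin.append_left]
          exact ⟨(hcond1 i1).1, le_trans hGsub1 (hcond1 i1).2⟩
        · rw [Fin.append_right]
          exact ⟨(hcond2 i2).1, le_trans hGsub2 (hcond2 i2).2⟩

end Decomp

section Projection

variable {d m : ℕ}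

def projL : (Fin (d + m) → ℝ) →ₗ[ℝ] (Fin d → ℝ) := LinearMap.funLeft ℝ ℝ (Fin.castAdd m)

lemma projL_eq (x : Fin (d + m) → ℝ) : projL x = projd x := rfl

lemma dotp_append (c : Fin d → ℝ) (x : Fin (d + m) → ℝ) :
    dotp (Fin.append c (0 : Fin m → ℝ)) x = dotp c (projd x) := by
  show (∑ i : Fin (d + m), Fin.append c (0 : Fin m → ℝ) i * x i) = ∑ i : Fin d, c i * x (Fin.castAdd m i)
  rw [Fin.sum_univ_add]
  simp [Fin.append_left, Fin.append_right]

lemma proj_maxFace (Q : Set (Fin (d + m) → ℝ)) (c : Fin d → ℝ) :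
    projd '' (maxFace Q (Fin.append c (0 : Fin m → ℝ))) = maxFace (projd '' Q) c := by
  ext y
  constructor
  · rintro ⟨x, ⟨hxQ, hxmax⟩, rfl⟩
    refine ⟨⟨x, hxQ, rfl⟩, ?_⟩
    rintro y' ⟨z, hzQ, rfl⟩
    have h := hxmax z hzQ
    rw [dotp_append, dotp_append] at h
    exact h
  · rintro ⟨⟨x, hxQ, rfl⟩, hymax⟩
    refine ⟨x, ⟨hxQ, ?_⟩, rfl⟩
    intro z hzQ
    rw [dotp_append, dotp_append]
    exact hymax (projd z) ⟨z, hzQ, rfl⟩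

lemma sdim_image_le (A : Set (Fin (d + m) → ℝ)) : sdim (projd '' A) ≤ sdim A := by
  have h1 : vectorSpan ℝ (projd '' A) ≤ Submodule.map (projL : (Fin (d+m) → ℝ) →ₗ[ℝ] (Fin d → ℝ)) (vectorSpan ℝ A) := by
    rw [vectorSpan_def, Submodule.span_le]
    rintro z hz
    rw [Set.mem_vsub] at hz
    obtain ⟨p, hp, q, hq, rfl⟩ := hz
    obtain ⟨p₀, hp₀, rfl⟩ := hp
    obtain ⟨q₀, hq₀, rfl⟩ := hq
    have heq : projd p₀ -ᵥ projd q₀ = projL (p₀ - q₀) := by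
      rw [map_sub]
      rfl
    rw [SetLike.mem_coe, heq]
    exact Submodule.mem_map_of_mem (vsub_mem_vectorSpan ℝ hp₀ hq₀)
  calc sdim (projd '' A) ≤ Module.finrank ℝ (Submodule.map (projL : (Fin (d+m) → ℝ) →ₗ[ℝ] (Fin d → ℝ)) (vectorSpan ℝ A)) :=
        Submodule.finrank_mono h1
    _ ≤ sdim A := Submodule.finrank_map_le projL (vectorSpan ℝ A)

lemma proj_image_hull {d m : ℕ} (X : Set (Fin (d + m) → ℝ)) :
    projd '' (convexHull ℝ X) = convexHull ℝ (projd '' X) := by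
  have hco : ⇑(projL : (Fin (d+m) → ℝ) →ₗ[ℝ] (Fin d → ℝ)) = (projd : (Fin (d+m) → ℝ) → (Fin d → ℝ)) := rfl
  rw [← hco]
  exact (projL : (Fin (d+m) → ℝ) →ₗ[ℝ] (Fin d → ℝ)).image_convexHull X

end Projection

end Proj



/-- If a full-dimensional polytope `Q` in `ℝ^(d+m)` with `fQ` facets projects onto the
`d`-dimensional polytope `P` with `fP` facets, then `fP ≤ (fQ + 1)^(m+1)`. -/
theorem facets_of_projection_bound (d m : ℕ)
    (Q : Set (Fin (d + m) → ℝ)) (hQ : IsPolytope Q) (hQdim : sdim Q = d + m)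
    (P : Set (Fin d → ℝ)) (hP : P = projd '' Q) (hPdim : sdim P = d)
    (fQ fP : ℕ)
    (hfQ : {F | IsFacetOf Q F}.ncard = fQ)
    (hfP : {F | IsFacetOf P F}.ncard = fP) :
    fP ≤ (fQ + 1) ^ (m + 1) := by
  classical
  obtain ⟨SQ, hSQ⟩ := hQ
  subst hSQ
  set Qh : Set (Fin (d + m) → ℝ) := convexHull ℝ (SQ : Set (Fin (d + m) → ℝ)) with hQh
  -- finiteness of the facet sets
  have hQfin : {F | IsFacetOf Qh F}.Finite := Proj.facets_finite SQ
  have hPpoly : P = convexHull ℝ ((SQ.image projd : Finset (Fin d → ℝ)) : Set (Fin d → ℝ)) := by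
    rw [hP, Finset.coe_image, hQh]
    exact Proj.proj_image_hull _
  have hPfin : {F | IsFacetOf P F}.Finite := by
    rw [hPpoly]
    exact Proj.facets_finite _
  -- the key existence statement
  have key : ∀ F, IsFacetOf P F →
      ∃ g : Fin (m + 1) → Option ↥{H : Set (Fin (d + m) → ℝ) | IsFacetOf Qh H},
        projd '' (Qh ∩ ⋂ i, Option.elim (g i) Set.univ Subtype.val) = F := by
    intro F hF
    obtain ⟨⟨c, hc⟩, hFne, hFdim⟩ := hF
    rw [hPdim] at hFdim
    have hd1 : 1 ≤ d := by omega
    have hSQne : SQ.Nonempty := by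
      rw [Finset.nonempty_iff_ne_empty]
      intro h
      have hQe : Qh = ∅ := by rw [hQh, h]; simp
      rw [hQe] at hQdim
      unfold sdim at hQdim
      rw [vectorSpan_empty, finrank_bot] at hQdim
      omega
    have htop : vectorSpan ℝ (convexHull ℝ (SQ : Set (Fin (d + m) → ℝ))) = ⊤ := by
      apply Submodule.eq_top_of_finrank_eq
      have h2 : Module.finrank ℝ (Fin (d + m) → ℝ) = d + m := by
        rw [Module.finrank_pi]; simp
      rw [h2]
      exact hQdim
    set ch := Fin.append c (0 : Fin m → ℝ) with hch
    set G := maxFace Qh ch with hGdef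
    have hproj : projd '' G = F := by
      rw [hGdef, Proj.proj_maxFace, ← hP, hc]
    have hGne : G.Nonempty := by
      obtain ⟨y, hy⟩ := hFne
      rw [← hproj] at hy
      obtain ⟨x, hx, -⟩ := hy
      exact ⟨x, hx⟩
    have hsdimle : sdim F ≤ sdim G := by
      rw [← hproj]
      exact Proj.sdim_image_le G
    have hdimG : d + m ≤ sdim G + (m + 1) := by omega
    obtain ⟨k, v, lam, hpos, hsum, hcond⟩ := Proj.decomp hSQne htop (m + 1) ch hdimG
    -- the vectors v i lie in the annihilator of the span of G
    have hvW : ∀ i, v i ∈ Proj.ann (vectorSpan ℝ G) := by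
      intro i x hx
      exact Proj.dotp_vectorSpan_maxFace (v i) x (vectorSpan_mono ℝ (hcond i).2 hx)
    have hWrank : Module.finrank ℝ (Proj.ann (vectorSpan ℝ G)) ≤ m + 1 := by
      have h1 := Proj.finrank_ann_add_sdim G
      omega
    -- reduce to a linearly independent subfamily
    obtain ⟨t', ht'sub, ht'li, lam2, hpos2, hsum2⟩ :=
      Proj.carath Finset.univ v lam (fun i _ => hpos i)
    have hcard : t'.card ≤ m + 1 := by
      have hli2 : LinearIndependent ℝ
          (fun i : {x // x ∈ t'} => (⟨v i, hvW i⟩ : Proj.ann (vectorSpan ℝ G))) := by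
        apply LinearIndependent.of_comp ((Proj.ann (vectorSpan ℝ G)).subtype)
        exact ht'li
      have h2 := hli2.fintype_card_le_finrank
      rw [Fintype.card_coe] at h2
      omega
    -- the face is the intersection of the chosen facets
    obtain ⟨g₀, hg₀G⟩ := hGne
    have hinter : G = Qh ∩ ⋂ i ∈ t', maxFace Qh (v i) := by
      have hmeq : (∑ i ∈ t', lam2 i • v i) = ch := by
        rw [hsum2, hsum]
      rw [hGdef, ← hmeq]
      exact Proj.maxFace_sum t' v lam2 hpos2 (Proj.maxFace_subset Qh ch hg₀G)
        (fun i _ => (hcond i).2 hg₀G)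
    -- build the padded tuple of facets
    set e := t'.equivFin with he
    refine ⟨fun i => if h : (i : ℕ) < t'.card then
        some ⟨maxFace Qh (v (e.symm ⟨(i : ℕ), h⟩ : {x // x ∈ t'})), (hcond _).1⟩ else none, ?_⟩
    have hiInter : (⋂ i : Fin (m + 1), Option.elim
        (if h : (i : ℕ) < t'.card then
          some (⟨maxFace Qh (v (e.symm ⟨(i : ℕ), h⟩ : {x // x ∈ t'})), (hcond _).1⟩ :
            ↥{H : Set (Fin (d + m) → ℝ) | IsFacetOf Qh H}) else none) Set.univ Subtype.val)
        = ⋂ i ∈ t', maxFace Qh (v i) := by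
      ext x
      rw [Set.mem_iInter, Set.mem_iInter₂]
      constructor
      · intro hx i hi
        have hjlt : ((e ⟨i, hi⟩ : Fin t'.card) : ℕ) < t'.card := (e ⟨i, hi⟩).isLt
        have hjle : ((e ⟨i, hi⟩ : Fin t'.card) : ℕ) < m + 1 := by omega
        have h3 := hx ⟨((e ⟨i, hi⟩ : Fin t'.card) : ℕ), hjle⟩
        rw [dif_pos hjlt] at h3
        have h4 : (⟨((e ⟨i, hi⟩ : Fin t'.card) : ℕ), hjlt⟩ : Fin t'.card) = e ⟨i, hi⟩ := by
          apply Fin.ext; rfl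
        rw [h4, Equiv.symm_apply_apply] at h3
        exact h3
      · intro hx i
        by_cases h : (i : ℕ) < t'.card
        · rw [dif_pos h]
          exact hx _ (e.symm ⟨(i : ℕ), h⟩).2
        · rw [dif_neg h]
          trivial
    rw [hiInter, ← hinter, hproj]
  -- counting
  haveI hPfint : Fintype ↥{F | IsFacetOf P F} := hPfin.fintype
  haveI hQfint : Fintype ↥{F | IsFacetOf Qh F} := hQfin.fintype
  have h1 : fP = {F | IsFacetOf P F}.toFinset.card := by
    rw [← hfP, Set.ncard_eq_toFinset_card']
  set Φ : Set (Fin d → ℝ) → (Fin (m + 1) → Option ↥{H : Set (Fin (d + m) → ℝ) | IsFacetOf Qh H}) :=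
    fun F => if h : IsFacetOf P F then (key F h).choose else fun _ => none with hΦ
  have hinj : Set.InjOn Φ ↑({F | IsFacetOf P F}.toFinset) := by
    intro F₁ h₁ F₂ h₂ heq
    rw [Finset.mem_coe, Set.mem_toFinset] at h₁ h₂
    have h₁' : IsFacetOf P F₁ := h₁
    have h₂' : IsFacetOf P F₂ := h₂
    have e₁ := (key F₁ h₁').choose_spec
    have e₂ := (key F₂ h₂').choose_spec
    simp only [hΦ] at heq
    rw [dif_pos h₁', dif_pos h₂'] at heq
    rw [← e₁, ← e₂, heq]
  have hle := Finset.card_le_card_of_injOn Φ (fun a _ => Finset.mem_univ _) hinj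
  rw [Finset.card_univ, Fintype.card_fun, Fintype.card_option, Fintype.card_fin] at hle
  have hQcard : Fintype.card ↥{F | IsFacetOf Qh F} = fQ := by
    rw [← hfQ, Set.ncard_eq_toFinset_card', Set.toFinset_card]
  rw [hQcard] at hle
  rw [h1]
  exact hle
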